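/- Let g : ℝ⁺ × ℕ → ℕ be an arbitrary function and define f : ℕ → ℕ by f(k) = 2·g(1/(4k+4), k). If 𝒢 is a fractionally (Be,g)-fragile class of graphs, then ∇_k(𝒢) ≤ f(k) for every integer k ≥ 0. -/

import Mathlib

/-- Transfer a walk whose support lies in `s` to the induced subgraph on `s`. -/
lemma walk_induce_aux {V : Type*} {G : SimpleGraph V} {s : Set V} :
    ∀ {a b : V} (p : G.Walk a b) (_ : ∀ x ∈ p.support, x ∈ s) (ha : a ∈ s) (hb : b ∈ s),
    ∃ q : (G.induce s).Walk ⟨a, ha⟩ ⟨b, hb⟩, q.length = p.length ∧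
      ∀ x ∈ q.support, (x : V) ∈ p.support := by
  intro a b p
  induction p with
  | nil =>
    intro hs ha hb
    exact ⟨SimpleGraph.Walk.nil, rfl, by simp⟩
  | cons h p ih =>
    rename_i u v w
    intro hs ha hb
    have hv : v ∈ s := hs v (by simp)
    obtain ⟨q, hql, hqs⟩ := ih (fun x hx => hs x (by simp [hx])) hv hb
    refine ⟨SimpleGraph.Walk.cons (by simpa using h) q, by simp [hql], ?_⟩
    intro x hx
    rw [SimpleGraph.Walk.support_cons] at hx
    rcases List.mem_cons.1 hx with h1 | h2
    · subst h1; simp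
    · simpa using Or.inr (hqs x h2)



open Classical Filter

attribute [local instance] Classical.propDecidable

noncomputable section

/-- A finite graph, bundled with its (finite) vertex type. -/
structure FGraph : Type 1 where
  V : Type
  [fin : Fintype V]
  G : SimpleGraph V

attribute [instance] FGraph.fin

namespace FGraph

/-- The number of vertices. -/
def card (G : FGraph) : ℕ := Fintype.card G.V

/-- The number of edges. -/
def edgeCount (G : FGraph) : ℕ := G.G.edgeSet.ncard

/-- The edge density `|E(G)|/|V(G)|`. -/
def density (G : FGraph) : ℝ := (G.edgeCount : ℝ) / (G.card : ℝ)

/-- `G − X`: the subgraph induced by the complement of `X`. -/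
def del (G : FGraph) (X : Set G.V) : FGraph := ⟨↥(Xᶜ), G.G.induce (Xᶜ : Set G.V)⟩

/-- `H` is (isomorphic to) a subgraph of `G`. -/
def IsSubgraphOf (H G : FGraph) : Prop :=
  ∃ f : H.V → G.V, Function.Injective f ∧ ∀ a b, H.G.Adj a b → G.G.Adj (f a) (f b)

/-- The class `C` is closed under taking subgraphs. -/
def SubgraphClosed (C : Set FGraph) : Prop :=
  ∀ G ∈ C, ∀ H : FGraph, IsSubgraphOf H G → H ∈ C

/-- `G` has maximum degree at most `d`. -/
def maxDegLE (G : FGraph) (d : ℕ) : Prop := ∀ v : G.V, (G.G.neighborSet v).ncard ≤ d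

/-- The maximum degree of `G`. -/
def maxDeg (G : FGraph) : ℕ := Finset.univ.sup fun v : G.V => (G.G.neighborSet v).ncard

/-- The class `C` has bounded maximum degree. -/
def BddMaxDeg (C : Set FGraph) : Prop := ∃ Δ : ℕ, ∀ G ∈ C, G.maxDegLE Δ

/-- `H` is a `d`-minor of `G`: obtained by contracting pairwise disjoint subgraphs of
radius at most `d` (the branch sets `B w`) and deleting vertices and edges. -/
def IsMinor (d : ℕ) (H G : FGraph) : Prop :=
  ∃ B : H.V → Set G.V,
    (∀ w, (B w).Nonempty) ∧
    (Pairwise fun w w' => Disjoint (B w) (B w')) ∧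
    (∀ w : H.V, ∃ v ∈ B w, ∀ u ∈ B w, ∃ p : G.G.Walk v u,
      p.length ≤ d ∧ ∀ x ∈ p.support, x ∈ B w) ∧
    (∀ w w' : H.V, H.G.Adj w w' → ∃ v ∈ B w, ∃ v' ∈ B w', G.G.Adj v v')

/-- The complete graph `K_t` as a bundled finite graph. -/
def completeFG (t : ℕ) : FGraph := ⟨Fin t, ⊤⟩

/-- The set of densities of `k`-minors of graphs in the class `C`. -/
def densSet (k : ℕ) (C : Set FGraph) : Set ℝ :=
  {r | ∃ G ∈ C, ∃ H : FGraph, IsMinor k H G ∧ r = H.density}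

/-- `∇_k(C)`: the supremum of densities of `k`-minors of graphs in `C`. -/
def nablaClass (k : ℕ) (C : Set FGraph) : ℝ := sSup (densSet k C)

/-- `G` has a balanced separation of size at most `s`. -/
def SepAtMost (G : FGraph) (s : ℕ) : Prop :=
  ∃ A B : G.G.Subgraph, A ⊔ B = ⊤ ∧ Disjoint A.edgeSet B.edgeSet ∧
    3 * (A.verts \ B.verts).ncard ≤ 2 * G.card ∧
    3 * (B.verts \ A.verts).ncard ≤ 2 * G.card ∧
    (A.verts ∩ B.verts).ncard ≤ s

/-- `s_C(n)`: the smallest `s` such that every graph in `C` with at most `n` vertices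
has a balanced separation of size at most `s`. -/
def sepf (C : Set FGraph) (n : ℕ) : ℕ :=
  sInf {s | ∀ G ∈ C, G.card ≤ n → SepAtMost G s}

/-- The class `C` has sublinear separators. -/
def SublinearSep (C : Set FGraph) : Prop :=
  Tendsto (fun n : ℕ => (sepf C n : ℝ) / (n : ℝ)) atTop (nhds 0)

/-- The class `C` has strongly sublinear separators. -/
def StronglySublinearSep (C : Set FGraph) : Prop :=
  ∃ c δ : ℝ, 1 ≤ c ∧ 0 ≤ δ ∧ δ < 1 ∧ ∀ n : ℕ, (sepf C n : ℝ) ≤ c * (n : ℝ) ^ δ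

/-- The number of vertices of the connected component of `v`. -/
def compSize (G : FGraph) (v : G.V) : ℕ := ((G.G.connectedComponentMk v).supp).ncard

/-- `G` has a fractional `C`-complementary packing of thickness at most `ε`. -/
def FracPack (G : FGraph) (C : Set FGraph) (ε : ℝ) : Prop :=
  ∃ π : Finset G.V → ℝ,
    (∀ X, 0 ≤ π X) ∧
    (∑ X : Finset G.V, π X = 1) ∧
    (∀ X : Finset G.V, π X ≠ 0 → G.del (↑X : Set G.V) ∈ C) ∧
    (∀ v : G.V, ∑ X ∈ Finset.univ.filter (fun X : Finset G.V => v ∈ X), π X ≤ ε)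

/-- `C` is an `ε`-witness for the class `Gc`: every graph in `Gc` has a fractional
`C`-complementary packing of thickness at most `ε`. -/
def Witness (C Gc : Set FGraph) (ε : ℝ) : Prop := ∀ G ∈ Gc, FracPack G C ε

/-- `Gc` is fractionally `P`-fragile. -/
def FracFragile (P : Set (Set FGraph)) (Gc : Set FGraph) : Prop :=
  ∀ ε : ℝ, 0 < ε → ∃ C ∈ P, Witness C Gc ε

/-- The class property `Vs` of all graph classes with bounded component size. -/
def Vs : Set (Set FGraph) := {C | ∃ t : ℕ, ∀ G ∈ C, ∀ v : G.V, G.compSize v ≤ t}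

/-- `(T, β)` is a tree decomposition of `G`. -/
def IsTreeDecomp (G : FGraph) {ι : Type} (T : SimpleGraph ι) (β : ι → Set G.V) : Prop :=
  T.IsTree ∧
  (∀ v : G.V, ∃ u, v ∈ β u) ∧
  (∀ v w : G.V, G.G.Adj v w → ∃ u, v ∈ β u ∧ w ∈ β u) ∧
  (∀ v : G.V, (T.induce {u | v ∈ β u}).Connected)

/-- `G` has treewidth at most `k`. -/
def twLE (G : FGraph) (k : ℕ) : Prop :=
  ∃ (ι : Type) (_ : Fintype ι) (T : SimpleGraph ι) (β : ι → Set G.V),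
    IsTreeDecomp G T β ∧ ∀ u, (β u).ncard ≤ k + 1

/-- The treewidth of `G`. -/
def treewidth (G : FGraph) : ℕ := sInf {k | twLE G k}

/-- The class property `Tw` of all graph classes with bounded treewidth. -/
def Tw : Set (Set FGraph) := {C | ∃ k : ℕ, ∀ G ∈ C, twLE G k}

end FGraph

/-- `Ex(f)`: the class of graphs `G` with `∇_k(G) ≤ f(k)` for all `k`. -/
def ExCl (f : ℕ → ℕ) : Set FGraph :=
  {G | ∀ k : ℕ, ∀ H : FGraph, FGraph.IsMinor k H G → H.density ≤ (f k : ℝ)}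

/-- **Lemma 13.** If `Gc` is fractionally `(Be,g)`-fragile, then the expansion of `Gc` is
bounded by `f(k) = 2·g(1/(4k+4), k)`. -/
theorem stmt6 (g : ℝ → ℕ → ℕ) (Gc : Set FGraph)
    (hfrag : ∀ ε : ℝ, 0 < ε → ∀ G ∈ Gc, FGraph.FracPack G (ExCl (g ε)) ε) :
    ∀ k : ℕ, ∀ G ∈ Gc, ∀ H : FGraph, FGraph.IsMinor k H G →
      H.density ≤ ((2 * g (1 / (4 * (k : ℝ) + 4)) k : ℕ) : ℝ) := by
  intro k G hG H hminor
  classical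
  set ε : ℝ := 1 / (4 * (k : ℝ) + 4) with hεdef
  have hε : 0 < ε := by positivity
  obtain ⟨B, hBne, hBdisj, hBrad, hBadj⟩ := hminor
  choose c hc hr using hBrad
  obtain ⟨π, hπ0, hπ1, hπmem, hπth⟩ := hfrag ε hε G hG
  -- choose an orientation for each potential edge
  have horient : ∀ e : Sym2 H.V, ∃ p : H.V × H.V, e = s(p.1, p.2) :=
    fun e => Sym2.ind (fun a b => ⟨(a, b), rfl⟩) e
  choose pr hpr using horient
  -- for each edge, a small "blocker" set `T e` containing the connecting walks
  have key : ∀ e : Sym2 H.V, ∃ T : Finset G.V, T.card ≤ 2 * k + 2 ∧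
      (e ∈ H.G.edgeSet → ∃ v v', G.G.Adj v v' ∧
        (∃ p : G.G.Walk (c (pr e).1) v, p.length ≤ k ∧
          ∀ x ∈ p.support, x ∈ B (pr e).1 ∧ x ∈ T) ∧
        (∃ p : G.G.Walk (c (pr e).2) v', p.length ≤ k ∧
          ∀ x ∈ p.support, x ∈ B (pr e).2 ∧ x ∈ T)) := by
    intro e
    by_cases he : e ∈ H.G.edgeSet
    · have hAdj : H.G.Adj (pr e).1 (pr e).2 := by
        have := he; rw [hpr e] at this; exact this
      obtain ⟨v, hv, v', hv', hvv'⟩ := hBadj _ _ hAdj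
      obtain ⟨p1, hl1, hs1⟩ := hr _ v hv
      obtain ⟨p2, hl2, hs2⟩ := hr _ v' hv'
      refine ⟨p1.support.toFinset ∪ p2.support.toFinset, ?_, fun _ => ⟨v, v', hvv', ⟨p1, hl1, ?_⟩, ⟨p2, hl2, ?_⟩⟩⟩
      · calc (p1.support.toFinset ∪ p2.support.toFinset).card
            ≤ p1.support.toFinset.card + p2.support.toFinset.card := Finset.card_union_le _ _
          _ ≤ p1.support.length + p2.support.length := by
              gcongr <;> exact List.toFinset_card_le _
          _ ≤ (k + 1) + (k + 1) := by
              rw [SimpleGraph.Walk.length_support, SimpleGraph.Walk.length_support]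
              omega
          _ = 2 * k + 2 := by ring
      · intro x hx
        exact ⟨hs1 x hx, Finset.mem_union_left _ (List.mem_toFinset.2 hx)⟩
      · intro x hx
        exact ⟨hs2 x hx, Finset.mem_union_right _ (List.mem_toFinset.2 hx)⟩
    · exact ⟨∅, by simp, fun h => absurd h he⟩
  choose T hTcard hTgood using key
  set E : Finset (Sym2 H.V) := H.G.edgeFinset with hE
  set n : ℕ := H.card with hn
  set gk : ℝ := (g ε k : ℝ) with hgk
  have hgk0 : 0 ≤ gk := Nat.cast_nonneg _
  set P : Sym2 H.V → Finset G.V → Prop := fun e X => ∀ x ∈ T e, x ∉ X with hP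
  -- Main per-X bound: surviving edges form a k-minor of G − X
  have main : ∀ X : Finset G.V, π X ≠ 0 →
      ((E.filter (fun e => P e X)).card : ℝ) ≤ gk * n := by
    intro X hX
    have hmem := hπmem X hX
    let Vx := {w : H.V // c w ∉ X}
    let Gx : SimpleGraph Vx :=
      { Adj := fun w w' => w.val ≠ w'.val ∧ s(w.val, w'.val) ∈ H.G.edgeSet ∧
          ∀ x ∈ T s(w.val, w'.val), x ∉ X
        symm := by
          constructor
          rintro w w' ⟨h1, h2, h3⟩
          refine ⟨h1.symm, ?_, ?_⟩
          · rwa [Sym2.eq_swap]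
          · rwa [Sym2.eq_swap]
        loopless := ⟨fun w h => h.1 rfl⟩ }
    let Hx : FGraph := ⟨Vx, Gx⟩
    -- reachable part of a branch set avoiding X
    let R : H.V → Set G.V := fun w =>
      {u | ∃ p : G.G.Walk (c w) u, p.length ≤ k ∧ ∀ x ∈ p.support, x ∈ B w ∧ x ∉ X}
    have hRB : ∀ w, ∀ u ∈ R w, u ∈ B w ∧ u ∉ X := by
      rintro w u ⟨p, _, hs⟩
      exact hs u p.end_mem_support
    let B' : Vx → Set (↥((↑X : Set G.V)ᶜ)) := fun w => {u | u.val ∈ R w.val}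
    have hcR : ∀ w : Vx, c w.val ∈ R w.val := by
      intro w
      exact ⟨SimpleGraph.Walk.nil, by simp, by
        intro x hx
        simp only [SimpleGraph.Walk.support_nil, List.mem_singleton] at hx
        subst hx
        exact ⟨hc _, w.property⟩⟩
    have hminor' : FGraph.IsMinor k Hx (G.del (↑X : Set G.V)) := by
      refine ⟨B', ?_, ?_, ?_, ?_⟩
      · intro w
        exact ⟨⟨c w.val, by simpa using w.property⟩, hcR w⟩
      · intro w w' hww'
        refine Set.disjoint_left.2 ?_
        intro u hu hu'
        have hne : w.val ≠ w'.val := fun h => hww' (Subtype.ext h)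
        exact Set.disjoint_left.1 (hBdisj hne) (hRB _ _ hu).1 (hRB _ _ hu').1
      · intro w
        refine ⟨⟨c w.val, by simpa using w.property⟩, hcR w, ?_⟩
        rintro u hu
        obtain ⟨p, hl, hs⟩ := hu
        have hsX : ∀ x ∈ p.support, x ∈ ((↑X : Set G.V)ᶜ) := fun x hx => (hs x hx).2
        obtain ⟨q, hql, hqs⟩ := walk_induce_aux p hsX (by simpa using w.property)
          (by simpa using (hs _ p.end_mem_support).2)
        refine ⟨q, hql.trans_le hl, ?_⟩
        intro x hx
        have hxp : Subtype.val x ∈ p.support := hqs x hx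
        show Subtype.val x ∈ R w.val
        refine ⟨p.takeUntil (Subtype.val x) hxp, ?_, ?_⟩
        · exact le_trans (SimpleGraph.Walk.length_takeUntil_le p hxp) hl
        · intro y hy
          exact hs y (SimpleGraph.Walk.support_takeUntil_subset p hxp hy)
      · rintro w w' ⟨hne, he, hT⟩
        obtain ⟨v, v', hvv', ⟨p1, hl1, hs1⟩, ⟨p2, hl2, hs2⟩⟩ := hTgood _ he
        have hcase : ((w.val : H.V) = (pr s(w.val, w'.val)).1 ∧ w'.val = (pr s(w.val, w'.val)).2)
            ∨ (w.val = (pr s(w.val, w'.val)).2 ∧ w'.val = (pr s(w.val, w'.val)).1) := by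
          have := hpr s(w.val, w'.val)
          rw [Sym2.eq_iff] at this
          tauto
        have hv1R : v ∈ R (pr s(w.val, w'.val)).1 :=
          ⟨p1, hl1, fun x hx => ⟨(hs1 x hx).1, hT x (hs1 x hx).2⟩⟩
        have hv2R : v' ∈ R (pr s(w.val, w'.val)).2 :=
          ⟨p2, hl2, fun x hx => ⟨(hs2 x hx).1, hT x (hs2 x hx).2⟩⟩
        have hvX : v ∉ X := hT v (hs1 v p1.end_mem_support).2
        have hv'X : v' ∉ X := hT v' (hs2 v' p2.end_mem_support).2
        rcases hcase with ⟨h1, h2⟩ | ⟨h1, h2⟩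
        · refine ⟨⟨v, by simpa using hvX⟩, by show v ∈ R w.val; rw [h1]; exact hv1R,
            ⟨v', by simpa using hv'X⟩, by show v' ∈ R w'.val; rw [h2]; exact hv2R, hvv'⟩
        · refine ⟨⟨v', by simpa using hv'X⟩, by show v' ∈ R w.val; rw [h1]; exact hv2R,
            ⟨v, by simpa using hvX⟩, by show v ∈ R w'.val; rw [h2]; exact hv1R, hvv'.symm⟩
    have hdens : Hx.density ≤ gk := hmem k Hx hminor'
    have hcard : Hx.card ≤ n := Fintype.card_subtype_le _
    have hEC : (Hx.edgeCount : ℝ) ≤ gk * Hx.card := by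
      by_cases h0 : Hx.card = 0
      · haveI hVe : IsEmpty Vx := Fintype.card_eq_zero_iff.1 h0
        haveI : IsEmpty (Sym2 Vx) := ⟨fun e => Sym2.ind (fun a _ => isEmptyElim a) e⟩
        have hempty : Hx.G.edgeSet = ∅ := Set.eq_empty_of_isEmpty _
        have hz : Hx.edgeCount = 0 := by
          unfold FGraph.edgeCount
          rw [hempty]
          simp
        rw [hz, Nat.cast_zero]
        exact mul_nonneg hgk0 (Nat.cast_nonneg _)
      · have hpos : (0 : ℝ) < Hx.card := by
          exact_mod_cast Nat.pos_of_ne_zero h0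
        have := hdens
        unfold FGraph.density at this
        rw [div_le_iff₀ hpos] at this
        exact this
    -- the surviving edges inject into the edges of Hx
    have hsub : ((E.filter (fun e => P e X)) : Set (Sym2 H.V)) ⊆
        Sym2.map (Subtype.val : Vx → H.V) '' Hx.G.edgeSet := by
      intro e he
      rw [Finset.coe_filter] at he
      obtain ⟨heE, hPX⟩ := he
      have heS : e ∈ H.G.edgeSet := by
        rwa [SimpleGraph.mem_edgeFinset] at heE
      obtain ⟨v, v', hvv', ⟨p1, hl1, hs1⟩, ⟨p2, hl2, hs2⟩⟩ := hTgood _ heS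
      have hc1 : c (pr e).1 ∉ X := hPX _ (hs1 _ p1.start_mem_support).2
      have hc2 : c (pr e).2 ∉ X := hPX _ (hs2 _ p2.start_mem_support).2
      have hAdj : H.G.Adj (pr e).1 (pr e).2 := by
        have := heS; rw [hpr e] at this; exact this
      refine ⟨s(⟨(pr e).1, hc1⟩, ⟨(pr e).2, hc2⟩), ?_, by rw [Sym2.map_pair_eq]; exact (hpr e).symm⟩
      rw [SimpleGraph.mem_edgeSet]
      refine ⟨hAdj.ne, ?_, ?_⟩
      · show s((pr e).1, (pr e).2) ∈ H.G.edgeSet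
        rw [← hpr e]; exact heS
      · show ∀ x ∈ T s((pr e).1, (pr e).2), x ∉ X
        rw [← hpr e]; exact hPX
    calc ((E.filter (fun e => P e X)).card : ℝ)
        = (((E.filter (fun e => P e X)) : Set (Sym2 H.V)).ncard : ℝ) := by
          rw [Set.ncard_coe_finset]
      _ ≤ ((Sym2.map (Subtype.val : Vx → H.V) '' Hx.G.edgeSet).ncard : ℝ) := by
          exact_mod_cast Nat.cast_le.2 (Set.ncard_le_ncard hsub (Set.toFinite _))
      _ = (Hx.G.edgeSet.ncard : ℝ) := by
          rw [Set.ncard_image_of_injective _ (Sym2.map.injective Subtype.val_injective)]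
      _ = (Hx.edgeCount : ℝ) := rfl
      _ ≤ gk * Hx.card := hEC
      _ ≤ gk * n := by
          apply mul_le_mul_of_nonneg_left _ hgk0
          exact_mod_cast hcard
  -- per-edge killing probability bound
  have hkill : ∀ e ∈ E, ∑ X : Finset G.V, π X * (if ¬ P e X then (1 : ℝ) else 0) ≤ 1 / 2 := by
    intro e _
    have step1 : ∀ X : Finset G.V, π X * (if ¬ P e X then (1 : ℝ) else 0) ≤
        π X * ∑ x ∈ T e, (if x ∈ X then (1 : ℝ) else 0) := by
      intro X
      apply mul_le_mul_of_nonneg_left _ (hπ0 X)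
      by_cases h : P e X
      · rw [if_neg (not_not_intro h)]
        apply Finset.sum_nonneg
        intro x _
        positivity
      · rw [if_pos h]
        have h' : ∃ x ∈ T e, x ∈ X := by
          by_contra hcon
          push_neg at hcon
          exact h hcon
        obtain ⟨x0, hx0T, hx0X⟩ := h'
        calc (1 : ℝ) = (if x0 ∈ X then (1 : ℝ) else 0) := by rw [if_pos hx0X]
          _ ≤ ∑ x ∈ T e, (if x ∈ X then (1 : ℝ) else 0) := by
              apply Finset.single_le_sum (fun x _ => by positivity) hx0T
    calc ∑ X : Finset G.V, π X * (if ¬ P e X then (1 : ℝ) else 0)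
        ≤ ∑ X : Finset G.V, π X * ∑ x ∈ T e, (if x ∈ X then (1 : ℝ) else 0) :=
          Finset.sum_le_sum fun X _ => step1 X
      _ = ∑ x ∈ T e, ∑ X : Finset G.V, π X * (if x ∈ X then (1 : ℝ) else 0) := by
          simp_rw [Finset.mul_sum]
          exact Finset.sum_comm
      _ ≤ ∑ x ∈ T e, ε := by
          apply Finset.sum_le_sum
          intro x _
          have : ∑ X : Finset G.V, π X * (if x ∈ X then (1 : ℝ) else 0) =
              ∑ X ∈ Finset.univ.filter (fun X : Finset G.V => x ∈ X), π X := by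
            rw [Finset.sum_filter]
            congr 1
            ext X
            by_cases h : x ∈ X <;> simp [h]
          rw [this]
          exact hπth x
      _ = (T e).card * ε := by rw [Finset.sum_const, nsmul_eq_mul]
      _ ≤ (2 * k + 2 : ℝ) * ε := by
          apply mul_le_mul_of_nonneg_right _ (le_of_lt hε)
          exact_mod_cast hTcard e
      _ = 1 / 2 := by
          rw [hεdef]
          have h4 : (4 : ℝ) * k + 4 ≠ 0 := by positivity
          field_simp
          ring
  -- global counting
  set m : ℕ := E.card with hm
  have hmEC : H.edgeCount = m := by
    unfold FGraph.edgeCount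
    rw [← SimpleGraph.coe_edgeFinset, Set.ncard_coe_finset]
  have hsplit : ∀ X : Finset G.V, ((E.filter (fun e => P e X)).card : ℝ) +
      ((E.filter (fun e => ¬ P e X)).card : ℝ) = (m : ℝ) := by
    intro X
    have := Finset.card_filter_add_card_filter_not (s := E) (p := fun e => P e X)
    exact_mod_cast this
  have hmain : (m : ℝ) ≤ gk * n + (m : ℝ) / 2 := by
    have h1 : (m : ℝ) = ∑ X : Finset G.V, π X * m := by
      rw [← Finset.sum_mul, hπ1, one_mul]
    have h2 : ∑ X : Finset G.V, π X * m =
        ∑ X : Finset G.V, (π X * (E.filter (fun e => P e X)).card +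
          π X * (E.filter (fun e => ¬ P e X)).card) := by
      apply Finset.sum_congr rfl
      intro X _
      rw [← mul_add, hsplit X]
    have h2' : ∑ X : Finset G.V, π X * (m : ℝ) =
        ∑ X : Finset G.V, π X * ((E.filter (fun e => P e X)).card : ℝ) +
        ∑ X : Finset G.V, π X * ((E.filter (fun e => ¬ P e X)).card : ℝ) := by
      rw [h2, Finset.sum_add_distrib]
    have h3 : ∑ X : Finset G.V, π X * ((E.filter (fun e => P e X)).card : ℝ) ≤ gk * n := by
      calc ∑ X : Finset G.V, π X * ((E.filter (fun e => P e X)).card : ℝ)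
          ≤ ∑ X : Finset G.V, π X * (gk * n) := by
            apply Finset.sum_le_sum
            intro X _
            by_cases hX : π X = 0
            · rw [hX]; simp
            · exact mul_le_mul_of_nonneg_left (main X hX) (hπ0 X)
        _ = gk * n := by rw [← Finset.sum_mul, hπ1, one_mul]
    have h4 : ∑ X : Finset G.V, π X * ((E.filter (fun e => ¬ P e X)).card : ℝ) ≤ (m : ℝ) / 2 := by
      have hcf : ∀ X : Finset G.V, ((E.filter (fun e => ¬ P e X)).card : ℝ) =
          ∑ e ∈ E, (if ¬ P e X then (1 : ℝ) else 0) := by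
        intro X
        rw [Finset.sum_boole]
      calc ∑ X : Finset G.V, π X * ((E.filter (fun e => ¬ P e X)).card : ℝ)
          = ∑ X : Finset G.V, ∑ e ∈ E, π X * (if ¬ P e X then (1 : ℝ) else 0) := by
            apply Finset.sum_congr rfl
            intro X _
            rw [hcf X, Finset.mul_sum]
        _ = ∑ e ∈ E, ∑ X : Finset G.V, π X * (if ¬ P e X then (1 : ℝ) else 0) :=
            Finset.sum_comm
        _ ≤ ∑ e ∈ E, (1 / 2 : ℝ) := Finset.sum_le_sum hkill
        _ = m * (1 / 2) := by rw [Finset.sum_const, nsmul_eq_mul]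
        _ = (m : ℝ) / 2 := by ring
    linarith
  -- conclude
  have hfin : (H.edgeCount : ℝ) ≤ 2 * gk * n := by
    rw [hmEC]
    linarith
  unfold FGraph.density
  rw [← hn]
  push_cast
  by_cases hn0 : n = 0
  · rw [hn0]
    simp
  · have hnpos : (0 : ℝ) < n := by exact_mod_cast Nat.pos_of_ne_zero hn0
    rw [div_le_iff₀ hnpos]
    calc (H.edgeCount : ℝ) ≤ 2 * gk * n := hfin
      _ = 2 * (g ε k : ℝ) * n := rfl
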